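/- Sharp radial logarithmic Sobolev inequality on the half-line: let n ≥ 1 be an integer and τ₀ > 0. For every continuously differentiable w : (0,∞) → ℝ such that ∫₀^∞ r^n w(r)² dr = 1, ∫₀^∞ r^n w'(r)² dr < ∞, and r ↦ r^n w(r)² log(w(r)²) is Lebesgue integrable, one has 4τ₀ · ∫₀^∞ r^n w'(r)² dr ≥ ∫₀^∞ r^n w(r)² log(w(r)²) dr + ((n+1)/2) · log(4πτ₀) + (n+1) − log(ω_n). -/

import Mathlib

open MeasureTheory Set

/-- The volume of the unit `n`-sphere, `ω_n = 2 π^((n+1)/2) / Γ((n+1)/2)`. -/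
noncomputable def sphereVolume (n : ℕ) : ℝ :=
  2 * Real.pi ^ (((n : ℝ) + 1) / 2) / Real.Gamma (((n : ℝ) + 1) / 2)

namespace RadialLSI

lemma sphereVolume_pos (n : ℕ) : 0 < sphereVolume n := by
  have h1 : (0:ℝ) < ((n : ℝ) + 1) / 2 := by positivity
  have := Real.Gamma_pos_of_pos h1
  have := Real.rpow_pos_of_pos Real.pi_pos (((n : ℝ) + 1) / 2)
  unfold sphereVolume
  positivity

/-- normalization constant `C = ω_n (4πτ)^{-(n+1)/2}`. -/
noncomputable def Cconst (n : ℕ) (τ : ℝ) : ℝ :=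
  sphereVolume n * (4 * Real.pi * τ) ^ (-(((n : ℝ) + 1) / 2))

lemma Cconst_pos (n : ℕ) {τ : ℝ} (hτ : 0 < τ) : 0 < Cconst n τ := by
  have h4 : (0:ℝ) < 4 * Real.pi * τ := by positivity
  exact mul_pos (sphereVolume_pos n) (Real.rpow_pos_of_pos h4 _)

/-- the radial Gaussian density. -/
noncomputable def gfun (n : ℕ) (τ : ℝ) (s : ℝ) : ℝ :=
  Cconst n τ * (s ^ n * Real.exp (-(s ^ 2 / (4 * τ))))

lemma gfun_cont (n : ℕ) (τ : ℝ) : Continuous (gfun n τ) := by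
  unfold gfun; continuity

lemma gfun_pos (n : ℕ) {τ s : ℝ} (hτ : 0 < τ) (hs : 0 < s) : 0 < gfun n τ s := by
  unfold gfun
  have := Cconst_pos n hτ
  positivity

lemma gfun_nonneg (n : ℕ) {τ : ℝ} (hτ : 0 < τ) {s : ℝ} (hs : 0 ≤ s) : 0 ≤ gfun n τ s :=
  mul_nonneg (Cconst_pos n hτ).le
    (mul_nonneg (pow_nonneg hs n) (Real.exp_pos _).le)

lemma gauss_moment {n : ℕ} (hn : 1 ≤ n) {b : ℝ} (hb : 0 < b) :
    ∫ s in Ioi (0:ℝ), s ^ n * Real.exp (-(b * s ^ 2))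
      = Real.Gamma (((n : ℝ) + 1) / 2) / (2 * b ^ (((n : ℝ) + 1) / 2)) := by
  set α : ℝ := ((n : ℝ) - 1) / 2 with hα
  have h2 : (0:ℝ) < 2 := two_pos
  -- substitution y = x^2
  have key := integral_comp_rpow_Ioi_of_pos (p := 2)
    (g := fun y : ℝ => (1/2) * (y ^ α * Real.exp (-(b * y)))) h2
  -- LHS of key equals our integral
  have hL : ∫ x in Ioi (0:ℝ), (2 * x ^ ((2:ℝ) - 1)) •
      ((1/2) * ((x ^ (2:ℝ)) ^ α * Real.exp (-(b * x ^ (2:ℝ)))))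
      = ∫ s in Ioi (0:ℝ), s ^ n * Real.exp (-(b * s ^ 2)) := by
    apply setIntegral_congr_fun measurableSet_Ioi
    intro x hx
    have hx0 : (0:ℝ) < x := hx
    have hx2 : x ^ (2:ℝ) = x ^ (2:ℕ) := by
      rw [show (2:ℝ) = ((2:ℕ):ℝ) by norm_num, Real.rpow_natCast]
    have hxa : (x ^ (2:ℝ)) ^ α = x ^ ((n:ℝ) - 1) := by
      rw [← Real.rpow_mul hx0.le]
      congr 1
      rw [hα]; ring
    have hxx : x ^ (n:ℕ) = x * x ^ ((n:ℝ) - 1) := by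
      rw [← Real.rpow_natCast x n, show ((n:ℕ):ℝ) = 1 + ((n:ℝ)-1) by ring,
        Real.rpow_add hx0, Real.rpow_one]
      norm_num
    simp only [smul_eq_mul]
    rw [hxa, hx2, show ((2:ℝ)-1) = (1:ℝ) by norm_num, Real.rpow_one, hxx]
    ring
  rw [hL] at key
  rw [key]
  -- now substitute z = x * b
  have key2 := integral_comp_mul_right_Ioi
    (g := fun z : ℝ => (1/2) * ((z ^ α / b ^ α) * Real.exp (-z))) 0 hb
  have hR : ∫ y in Ioi (0:ℝ), (fun y => 1 / 2 * (y ^ α * Real.exp (-(b * y)))) y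
      = ∫ y in Ioi (0:ℝ), (1/2) * (((y * b) ^ α / b ^ α) * Real.exp (-(y * b))) := by
    apply setIntegral_congr_fun measurableSet_Ioi
    intro y hy
    have hy0 : (0:ℝ) < y := hy
    have hmul : (y * b) ^ α = y ^ α * b ^ α := Real.mul_rpow hy0.le hb.le
    have hbα : b ^ α ≠ 0 := (Real.rpow_pos_of_pos hb α).ne'
    dsimp only
    rw [mul_comm b y, hmul, mul_div_assoc, div_self hbα, mul_one]
  rw [hR]
  simp only [zero_mul] at key2
  rw [key2]
  -- evaluate using the Gamma integral
  have hΓ : Real.Gamma (((n:ℝ)+1)/2) = ∫ z in Ioi (0:ℝ), Real.exp (-z) * z ^ (((n:ℝ)+1)/2 - 1) :=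
    Real.Gamma_eq_integral (by positivity)
  have hα1 : ((n:ℝ)+1)/2 - 1 = α := by rw [hα]; ring
  rw [hα1] at hΓ
  have hbα : b ^ α ≠ 0 := (Real.rpow_pos_of_pos hb α).ne'
  have hsplit : ∫ x in Ioi (0:ℝ), 1/2 * (x ^ α / b ^ α * Real.exp (-x))
      = (1/(2 * b ^ α)) * ∫ x in Ioi (0:ℝ), Real.exp (-x) * x ^ α := by
    rw [← integral_const_mul]
    apply setIntegral_congr_fun measurableSet_Ioi
    intro x _
    field_simp
  rw [hsplit, ← hΓ, smul_eq_mul,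
    show ((n:ℝ)+1)/2 = α + 1 by rw [hα]; ring, Real.rpow_add hb, Real.rpow_one]
  field_simp
  try ring
  try exact Or.inl trivial
lemma gfun_integrableOn (n : ℕ) {τ : ℝ} (hτ : 0 < τ) : IntegrableOn (gfun n τ) (Ioi 0) := by
  have hb : (0:ℝ) < (4*τ)⁻¹ := by positivity
  have hs : (-1:ℝ) < (n:ℝ) := lt_of_lt_of_le (by norm_num) (Nat.cast_nonneg n)
  have h := (integrableOn_rpow_mul_exp_neg_mul_sq hb hs).const_mul (Cconst n τ)
  apply MeasureTheory.IntegrableOn.congr_fun h _ measurableSet_Ioi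
  intro x hx
  have hx0 : (0:ℝ) < x := hx
  unfold gfun
  dsimp only
  rw [Real.rpow_natCast]
  congr 2
  field_simp

lemma gfun_total (n : ℕ) (hn : 1 ≤ n) {τ : ℝ} (hτ : 0 < τ) :
    ∫ s in Ioi (0:ℝ), gfun n τ s = 1 := by
  have hb : (0:ℝ) < (4*τ)⁻¹ := by positivity
  have h1 : ∫ s in Ioi (0:ℝ), gfun n τ s
      = Cconst n τ * ∫ s in Ioi (0:ℝ), s ^ n * Real.exp (-((4*τ)⁻¹ * s ^ 2)) := by
    rw [← integral_const_mul]
    apply setIntegral_congr_fun measurableSet_Ioi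
    intro x _
    unfold gfun
    congr 3
    field_simp
  rw [h1, gauss_moment hn hb]
  set m2 : ℝ := ((n:ℝ)+1)/2 with hm2
  have hm2pos : 0 < m2 := by rw [hm2]; positivity
  have hΓpos := Real.Gamma_pos_of_pos hm2pos
  have hπ := Real.pi_pos
  have h4τ : (0:ℝ) < 4*τ := by positivity
  have hb' : ((4*τ)⁻¹) ^ m2 = ((4*τ) ^ m2)⁻¹ := Real.inv_rpow h4τ.le m2
  have hsplit : (4*Real.pi*τ) ^ m2 = (4*τ) ^ m2 * Real.pi ^ m2 := by
    rw [← Real.mul_rpow h4τ.le Real.pi_pos.le]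
    ring_nf
  have hpos1 : (0:ℝ) < (4*τ) ^ m2 := Real.rpow_pos_of_pos h4τ _
  have hpos2 : (0:ℝ) < Real.pi ^ m2 := Real.rpow_pos_of_pos hπ _
  unfold Cconst sphereVolume
  rw [Real.rpow_neg (by positivity), hsplit, hb', ← hm2]
  field_simp

/-- the CDF of the radial Gaussian. -/
noncomputable def Gfun (n : ℕ) (τ : ℝ) (s : ℝ) : ℝ := ∫ t in (0:ℝ)..s, gfun n τ t

lemma Gfun_hasDeriv (n : ℕ) (τ : ℝ) (s : ℝ) : HasDerivAt (Gfun n τ) (gfun n τ s) s :=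
  intervalIntegral.integral_hasDerivAt_right ((gfun_cont n τ).intervalIntegrable 0 s)
    ((gfun_cont n τ).stronglyMeasurableAtFilter _ _) (gfun_cont n τ).continuousAt

lemma Gfun_cont (n : ℕ) (τ : ℝ) : Continuous (Gfun n τ) :=
  continuous_iff_continuousAt.2 fun s => (Gfun_hasDeriv n τ s).continuousAt

lemma Gfun_zero (n : ℕ) (τ : ℝ) : Gfun n τ 0 = 0 := intervalIntegral.integral_same

lemma Gfun_strictMonoOn (n : ℕ) {τ : ℝ} (hτ : 0 < τ) : StrictMonoOn (Gfun n τ) (Ici 0) := by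
  intro x hx y hy hxy
  have hint : ∀ a b : ℝ, IntervalIntegrable (gfun n τ) volume a b :=
    fun a b => (gfun_cont n τ).intervalIntegrable a b
  have hadd : Gfun n τ x + ∫ t in x..y, gfun n τ t = Gfun n τ y :=
    intervalIntegral.integral_add_adjacent_intervals (hint 0 x) (hint x y)
  have hpos : 0 < ∫ t in x..y, gfun n τ t := by
    apply intervalIntegral.intervalIntegral_pos_of_pos_on (hint x y) _ hxy
    intro t ht
    exact gfun_pos n hτ (lt_of_le_of_lt hx ht.1)
  linarith

lemma Gfun_le_one (n : ℕ) (hn : 1 ≤ n) {τ : ℝ} (hτ : 0 < τ) {s : ℝ} (hs : 0 ≤ s) :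
    Gfun n τ s ≤ 1 := by
  rw [← gfun_total n hn hτ]
  unfold Gfun
  rw [intervalIntegral.integral_of_le hs]
  apply setIntegral_mono_set (gfun_integrableOn n hτ)
  · filter_upwards [ae_restrict_mem measurableSet_Ioi] with t ht
    exact gfun_nonneg n hτ (le_of_lt ht)
  · exact HasSubset.Subset.eventuallyLE Ioc_subset_Ioi_self

lemma Gfun_tendsto (n : ℕ) (hn : 1 ≤ n) {τ : ℝ} (hτ : 0 < τ) :
    Filter.Tendsto (Gfun n τ) Filter.atTop (nhds 1) := by
  have := MeasureTheory.intervalIntegral_tendsto_integral_Ioi 0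
    (gfun_integrableOn n hτ) Filter.tendsto_id
  rwa [gfun_total n hn hτ] at this

open Classical in
/-- inverse of the CDF. -/
noncomputable def Qfun (n : ℕ) (τ : ℝ) (u : ℝ) : ℝ :=
  if h : ∃ s, 0 < s ∧ Gfun n τ s = u then h.choose else 1

lemma Qfun_exists (n : ℕ) (hn : 1 ≤ n) {τ : ℝ} (hτ : 0 < τ) {u : ℝ} (hu : u ∈ Ioo (0:ℝ) 1) :
    ∃ s, 0 < s ∧ Gfun n τ s = u := by
  obtain ⟨M, hM, h0M⟩ := (((Gfun_tendsto n hn hτ).eventually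
    (eventually_gt_nhds hu.2)).and (Filter.eventually_ge_atTop 0)).exists
  have : u ∈ Ioo (Gfun n τ 0) (Gfun n τ M) := by
    constructor
    · rw [Gfun_zero]; exact hu.1
    · exact hM
  obtain ⟨s, hs, hGs⟩ := intermediate_value_Ioo h0M (Gfun_cont n τ).continuousOn this
  exact ⟨s, hs.1, hGs⟩

lemma Qfun_spec (n : ℕ) (hn : 1 ≤ n) {τ : ℝ} (hτ : 0 < τ) {u : ℝ} (hu : u ∈ Ioo (0:ℝ) 1) :
    0 < Qfun n τ u ∧ Gfun n τ (Qfun n τ u) = u := by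
  have h := Qfun_exists n hn hτ hu
  rw [Qfun, dif_pos h]
  exact h.choose_spec

lemma Qfun_le (n : ℕ) (hn : 1 ≤ n) {τ : ℝ} (hτ : 0 < τ) {u v : ℝ}
    (hu : u ∈ Ioo (0:ℝ) 1) (hv : v ∈ Ioo (0:ℝ) 1) (huv : u ≤ v) :
    Qfun n τ u ≤ Qfun n τ v := by
  obtain ⟨hqu, hGu⟩ := Qfun_spec n hn hτ hu
  obtain ⟨hqv, hGv⟩ := Qfun_spec n hn hτ hv
  by_contra hc
  push_neg at hc
  have := Gfun_strictMonoOn n hτ hqv.le hqu.le hc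
  rw [hGu, hGv] at this
  linarith

lemma Qfun_contAt (n : ℕ) (hn : 1 ≤ n) {τ : ℝ} (hτ : 0 < τ) {u₀ : ℝ}
    (hu₀ : u₀ ∈ Ioo (0:ℝ) 1) : ContinuousAt (Qfun n τ) u₀ := by
  obtain ⟨hq0, hG0⟩ := Qfun_spec n hn hτ hu₀
  rw [ContinuousAt]
  apply tendsto_order.2
  constructor
  · intro l hl
    rcases lt_or_ge l 0 with h | h
    · filter_upwards [Ioo_mem_nhds hu₀.1 hu₀.2] with u hu
      exact lt_of_lt_of_le h (Qfun_spec n hn hτ hu).1.le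
    · have hGl : Gfun n τ l < u₀ := by
        rw [← hG0]; exact Gfun_strictMonoOn n hτ h (le_trans h hl.le) hl
      have hGlnn : 0 ≤ Gfun n τ l := by
        rw [← Gfun_zero n τ]
        rcases eq_or_lt_of_le h with h' | h'
        · rw [← h']
        · exact (Gfun_strictMonoOn n hτ (le_refl (0:ℝ)) h h').le
      filter_upwards [Ioo_mem_nhds hGl hu₀.2] with u hu
      have hu' : u ∈ Ioo (0:ℝ) 1 := ⟨lt_of_le_of_lt hGlnn hu.1, hu.2⟩
      obtain ⟨hq, hG⟩ := Qfun_spec n hn hτ hu'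
      by_contra hc
      push_neg at hc
      have : Gfun n τ (Qfun n τ u) ≤ Gfun n τ l := by
        rcases eq_or_lt_of_le hc with h'' | h''
        · rw [h'']
        · exact (Gfun_strictMonoOn n hτ hq.le h h'').le
      rw [hG] at this
      linarith [hu.1]
  · intro h hh
    have hh0 : (0:ℝ) < h := lt_trans hq0 hh
    have hGh : u₀ < Gfun n τ h := by
      rw [← hG0]; exact Gfun_strictMonoOn n hτ hq0.le hh0.le hh
    have hGh1 : Gfun n τ h ≤ 1 := Gfun_le_one n hn hτ hh0.le
    filter_upwards [Ioo_mem_nhds hu₀.1 hGh] with u hu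
    have hu' : u ∈ Ioo (0:ℝ) 1 := ⟨hu.1, lt_of_lt_of_le hu.2 hGh1⟩
    obtain ⟨hq, hG⟩ := Qfun_spec n hn hτ hu'
    by_contra hc
    push_neg at hc
    have : Gfun n τ h ≤ Gfun n τ (Qfun n τ u) := by
      rcases eq_or_lt_of_le hc with h'' | h''
      · rw [h'']
      · exact (Gfun_strictMonoOn n hτ hh0.le hq.le h'').le
    rw [hG] at this
    linarith [hu.2]

lemma Qfun_hasDeriv (n : ℕ) (hn : 1 ≤ n) {τ : ℝ} (hτ : 0 < τ) {u : ℝ}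
    (hu : u ∈ Ioo (0:ℝ) 1) :
    HasDerivAt (Qfun n τ) (gfun n τ (Qfun n τ u))⁻¹ u := by
  apply HasDerivAt.of_local_left_inverse (Qfun_contAt n hn hτ hu)
    (Gfun_hasDeriv n τ (Qfun n τ u))
    (gfun_pos n hτ (Qfun_spec n hn hτ hu).1).ne'
  filter_upwards [Ioo_mem_nhds hu.1 hu.2] with v hv
  exact (Qfun_spec n hn hτ hv).2

/-- the density `f(r) = r^n w(r)^2`. -/
noncomputable def ffun (n : ℕ) (w : ℝ → ℝ) (r : ℝ) : ℝ := r ^ n * (w r) ^ 2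

/-- its CDF. -/
noncomputable def Ffun (n : ℕ) (w : ℝ → ℝ) (r : ℝ) : ℝ := ∫ t in (0:ℝ)..r, ffun n w t

/-- the ε-regularized transport map. -/
noncomputable def Tfun (n : ℕ) (τ : ℝ) (w : ℝ → ℝ) (ε : ℝ) (r : ℝ) : ℝ :=
  Qfun n τ (ε + (1 - 2*ε) * Ffun n w r)

section F

variable {n : ℕ} {τ ε : ℝ} {w : ℝ → ℝ}

lemma ffun_nonneg {r : ℝ} (hr : 0 ≤ r) : 0 ≤ ffun n w r :=
  mul_nonneg (pow_nonneg hr n) (sq_nonneg _)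

lemma ffun_contOn (hw : ContDiffOn ℝ 1 w (Ioi 0)) : ContinuousOn (ffun n w) (Ioi 0) := by
  apply ContinuousOn.mul (Continuous.continuousOn (by continuity))
  exact (hw.continuousOn.pow 2)

lemma ffun_intervalInt (hw : ContDiffOn ℝ 1 w (Ioi 0))
    (hfi : IntegrableOn (ffun n w) (Ioi 0)) {r : ℝ} (hr : 0 ≤ r) :
    IntervalIntegrable (ffun n w) volume 0 r := by
  rw [intervalIntegrable_iff_integrableOn_Ioc_of_le hr]
  exact hfi.mono_set Ioc_subset_Ioi_self

lemma Ffun_hasDeriv (hw : ContDiffOn ℝ 1 w (Ioi 0))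
    (hfi : IntegrableOn (ffun n w) (Ioi 0)) {r : ℝ} (hr : 0 < r) :
    HasDerivAt (Ffun n w) (ffun n w r) r := by
  apply intervalIntegral.integral_hasDerivAt_right (ffun_intervalInt hw hfi hr.le)
    (ContinuousOn.stronglyMeasurableAtFilter isOpen_Ioi (ffun_contOn hw) r hr)
    ((ffun_contOn hw).continuousAt (isOpen_Ioi.mem_nhds hr))

lemma Ffun_nonneg {r : ℝ} (hr : 0 ≤ r) : 0 ≤ Ffun n w r := by
  apply intervalIntegral.integral_nonneg hr
  intro t ht
  exact ffun_nonneg ht.1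

lemma Ffun_le_one (hw : ContDiffOn ℝ 1 w (Ioi 0))
    (hfi : IntegrableOn (ffun n w) (Ioi 0))
    (hnorm1 : ∫ r in Ioi (0:ℝ), ffun n w r = 1) {r : ℝ} (hr : 0 ≤ r) :
    Ffun n w r ≤ 1 := by
  rw [← hnorm1]
  unfold Ffun
  rw [intervalIntegral.integral_of_le hr]
  apply setIntegral_mono_set hfi
  · filter_upwards [ae_restrict_mem measurableSet_Ioi] with t ht
    exact ffun_nonneg (le_of_lt ht)
  · exact HasSubset.Subset.eventuallyLE Ioc_subset_Ioi_self

lemma umem (hw : ContDiffOn ℝ 1 w (Ioi 0)) (hfi : IntegrableOn (ffun n w) (Ioi 0))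
    (hnorm1 : ∫ r in Ioi (0:ℝ), ffun n w r = 1) (hε : ε ∈ Ioo (0:ℝ) (1/2))
    {r : ℝ} (hr : 0 < r) :
    ε + (1 - 2*ε) * Ffun n w r ∈ Ioo (0:ℝ) 1 ∧ ε + (1 - 2*ε) * Ffun n w r ≤ 1 - ε := by
  have h1 : 0 ≤ Ffun n w r := Ffun_nonneg hr.le
  have h2 : Ffun n w r ≤ 1 := Ffun_le_one hw hfi hnorm1 hr.le
  have h3 : 0 < 1 - 2*ε := by linarith [hε.2]
  constructor
  · constructor
    · nlinarith [hε.1]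
    · nlinarith [hε.1]
  · nlinarith

end F

section T

variable {n : ℕ} {τ ε : ℝ} {w : ℝ → ℝ}

variable (hn : 1 ≤ n) (hτ : 0 < τ) (hw : ContDiffOn ℝ 1 w (Ioi 0))
  (hfi : IntegrableOn (ffun n w) (Ioi 0))
  (hnorm1 : ∫ r in Ioi (0:ℝ), ffun n w r = 1) (hε : ε ∈ Ioo (0:ℝ) (1/2))

include hn hτ hw hfi hnorm1 hε

lemma Tfun_pos {r : ℝ} (hr : 0 < r) : 0 < Tfun n τ w ε r :=
  (Qfun_spec n hn hτ (umem hw hfi hnorm1 hε hr).1).1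

lemma Tfun_G {r : ℝ} (hr : 0 < r) :
    Gfun n τ (Tfun n τ w ε r) = ε + (1 - 2*ε) * Ffun n w r :=
  (Qfun_spec n hn hτ (umem hw hfi hnorm1 hε hr).1).2

lemma Tfun_le {r : ℝ} (hr : 0 < r) : Tfun n τ w ε r ≤ Qfun n τ (1 - ε) := by
  have h1ε : (1 - ε) ∈ Ioo (0:ℝ) 1 := by
    constructor <;> [linarith [hε.1, hε.2]; linarith [hε.1]]
  exact Qfun_le n hn hτ (umem hw hfi hnorm1 hε hr).1 h1ε (umem hw hfi hnorm1 hε hr).2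

lemma Tfun_hasDeriv {r : ℝ} (hr : 0 < r) :
    HasDerivAt (Tfun n τ w ε)
      ((gfun n τ (Tfun n τ w ε r))⁻¹ * ((1 - 2*ε) * ffun n w r)) r := by
  have hu := (umem hw hfi hnorm1 hε hr).1
  have hQ := Qfun_hasDeriv n hn hτ hu
  have hF : HasDerivAt (fun s => ε + (1 - 2*ε) * Ffun n w s) ((1 - 2*ε) * ffun n w r) r :=
    ((Ffun_hasDeriv hw hfi hr).const_mul (1 - 2*ε)).const_add ε
  exact HasDerivAt.comp r hQ hF

/-- the derivative of `f · T`. -/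
noncomputable def phifun (n : ℕ) (τ : ℝ) (w : ℝ → ℝ) (ε : ℝ) (r : ℝ) : ℝ :=
  ((n : ℝ) * r^(n-1) * (w r)^2 + r^n * (2 * w r * deriv w r)) * Tfun n τ w ε r
    + ffun n w r * ((gfun n τ (Tfun n τ w ε r))⁻¹ * ((1-2*ε) * ffun n w r))

lemma w_hasDeriv {r : ℝ} (hr : 0 < r) : HasDerivAt w (deriv w r) r := by
  exact ((hw.differentiableOn one_ne_zero).differentiableAt (isOpen_Ioi.mem_nhds hr)).hasDerivAt

lemma ffun_hasDeriv {r : ℝ} (hr : 0 < r) :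
    HasDerivAt (ffun n w) ((n : ℝ) * r^(n-1) * (w r)^2 + r^n * (2 * w r * deriv w r)) r := by
  have h1 := hasDerivAt_pow n r
  have h2 := (w_hasDeriv hn hτ hw hfi hnorm1 hε hr).pow 2
  have := h1.mul h2
  exact this.congr_deriv (by simp only [Pi.pow_apply]; push_cast; ring)

lemma fT_hasDeriv {r : ℝ} (hr : 0 < r) :
    HasDerivAt (fun s => ffun n w s * Tfun n τ w ε s) (phifun n τ w ε r) r :=
  (ffun_hasDeriv hn hτ hw hfi hnorm1 hε hr).mul (Tfun_hasDeriv hn hτ hw hfi hnorm1 hε hr)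


end T

end RadialLSI

namespace RadialLSI

section T

variable {n : ℕ} {τ ε : ℝ} {w : ℝ → ℝ}

variable (hn : 1 ≤ n) (hτ : 0 < τ) (hw : ContDiffOn ℝ 1 w (Ioi 0))
  (hfi : IntegrableOn (ffun n w) (Ioi 0))
  (hnorm1 : ∫ r in Ioi (0:ℝ), ffun n w r = 1) (hε : ε ∈ Ioo (0:ℝ) (1/2))

include hn hτ hw hfi hnorm1 hε

lemma pointwise_ineq {r : ℝ} (hr : 0 < r) :
    ffun n w r * Real.log ((w r)^2)
      ≤ (Real.log (Cconst n τ) - ((n:ℝ)+1) - Real.log (1 - 2*ε)) * ffun n w r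
        + 4*τ*(r^n * (deriv w r)^2) + phifun n τ w ε r := by
  set t := Tfun n τ w ε r with hTdef
  have ht : 0 < t := Tfun_pos hn hτ hw hfi hnorm1 hε hr
  have hgt : 0 < gfun n τ t := gfun_pos n hτ ht
  have hrn : (0:ℝ) < r ^ n := pow_pos hr n
  have hpow : r ^ (n-1) * r = r ^ n := by
    rw [← pow_succ]
    congr 1
    omega
  rcases eq_or_ne (w r) 0 with hw0 | hw0
  · have hf0 : ffun n w r = 0 := by unfold ffun; rw [hw0]; ring
    unfold phifun
    rw [← hTdef, hf0, hw0]
    have h4 : (0:ℝ) ≤ 4*τ*(r^n * (deriv w r)^2) := by positivity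
    ring_nf
    nlinarith
  · have hfr : 0 < ffun n w r := by
      have h : 0 < (w r)^2 := by positivity
      exact mul_pos hrn h
    have h2ε : 0 < 1 - 2*ε := by linarith [hε.2]
    set t' := (gfun n τ t)⁻¹ * ((1-2*ε) * ffun n w r) with ht'def
    have ht' : 0 < t' := mul_pos (inv_pos.2 hgt) (mul_pos h2ε hfr)
    have hma : Real.log t' = Real.log (1-2*ε) + Real.log (ffun n w r) - Real.log (gfun n τ t) := by
      rw [ht'def, Real.log_mul (inv_pos.2 hgt).ne' (mul_pos h2ε hfr).ne',
        Real.log_mul h2ε.ne' hfr.ne', Real.log_inv]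
      ring
    have hlg : Real.log (gfun n τ t) = Real.log (Cconst n τ) + (n:ℝ) * Real.log t
        - t^2/(4*τ) := by
      unfold gfun
      rw [Real.log_mul (Cconst_pos n hτ).ne' (by positivity),
        Real.log_mul (by positivity) (Real.exp_pos _).ne', Real.log_pow, Real.log_exp]
      ring
    have hlf : Real.log (ffun n w r) = (n:ℝ) * Real.log r + Real.log ((w r)^2) := by
      unfold ffun
      rw [Real.log_mul hrn.ne' (by positivity), Real.log_pow]
    have e1 : Real.log t' ≤ t' - 1 := Real.log_le_sub_one_of_pos ht'
    have e2 : Real.log t - Real.log r ≤ t/r - 1 := by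
      have h := Real.log_le_sub_one_of_pos (div_pos ht hr)
      rwa [Real.log_div ht.ne' hr.ne'] at h
    have e2' : (n:ℝ) * (Real.log t - Real.log r) ≤ (n:ℝ) * (t/r - 1) :=
      mul_le_mul_of_nonneg_left e2 (Nat.cast_nonneg n)
    have hA : Real.log ((w r)^2) ≤ (t' - 1) + Real.log (Cconst n τ)
        + (n:ℝ) * (t/r - 1) - t^2/(4*τ) - Real.log (1-2*ε) := by linarith
    have hB := mul_le_mul_of_nonneg_left hA hfr.le
    have hkey : (0:ℝ) ≤ 4*τ*(r^n*(deriv w r)^2) + r^n*(2*w r*deriv w r)*t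
        + r^n*(w r)^2*(t^2/(4*τ)) := by
      have h1 : (0:ℝ) ≤ r^n * ((4*τ*deriv w r + w r * t)^2 / (4*τ)) := by positivity
      have h2 : r^n * ((4*τ*deriv w r + w r * t)^2 / (4*τ))
          = 4*τ*(r^n*(deriv w r)^2) + r^n*(2*w r*deriv w r)*t + r^n*(w r)^2*(t^2/(4*τ)) := by
        field_simp
        ring
      linarith
    have hfrr : ffun n w r * (t/r) = r^(n-1) * (w r)^2 * t := by
      unfold ffun
      rw [← hpow]
      field_simp
    have hB' : ffun n w r * Real.log ((w r)^2) ≤ ffun n w r * t' - ffun n w r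
        + ffun n w r * Real.log (Cconst n τ) + (n:ℝ)*(r^(n-1)*(w r)^2*t) - (n:ℝ)*ffun n w r
        - ffun n w r*(t^2/(4*τ)) - ffun n w r*Real.log (1-2*ε) := by
      have hexp : ffun n w r * ((t' - 1) + Real.log (Cconst n τ) + (n:ℝ)*(t/r - 1)
          - t^2/(4*τ) - Real.log (1-2*ε))
          = ffun n w r * t' - ffun n w r + ffun n w r * Real.log (Cconst n τ)
            + (n:ℝ)*(ffun n w r*(t/r)) - (n:ℝ)*ffun n w r
            - ffun n w r*(t^2/(4*τ)) - ffun n w r*Real.log (1-2*ε) := by ring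
      rw [hexp, hfrr] at hB
      exact hB
    unfold phifun
    rw [← hTdef, ← ht'def]
    have hdist : ((n:ℝ) * r^(n-1) * (w r)^2 + r^n * (2 * w r * deriv w r)) * t
        = (n:ℝ)*(r^(n-1)*(w r)^2*t) + r^n*(2*w r*deriv w r)*t := by ring
    rw [hdist]
    unfold ffun at hB' ⊢
    linarith [hB', hkey]

lemma Tfun_contOn : ContinuousOn (Tfun n τ w ε) (Ioi 0) :=
  fun r hr => ((Tfun_hasDeriv hn hτ hw hfi hnorm1 hε hr).continuousAt).continuousWithinAt

omit hn hτ hfi hnorm1 hε in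
lemma deriv_w_contOn : ContinuousOn (deriv w) (Ioi 0) :=
  hw.continuousOn_deriv_of_isOpen isOpen_Ioi le_rfl

lemma phifun_contOn : ContinuousOn (phifun n τ w ε) (Ioi 0) := by
  have hT := Tfun_contOn hn hτ hw hfi hnorm1 hε
  have hginv : ContinuousOn (fun r => (gfun n τ (Tfun n τ w ε r))⁻¹) (Ioi 0) :=
    ((gfun_cont n τ).comp_continuousOn hT).inv₀
      (fun r hr => (gfun_pos n hτ (Tfun_pos hn hτ hw hfi hnorm1 hε hr)).ne')
  have hw2 : ContinuousOn (fun r => (w r)^2) (Ioi 0) := hw.continuousOn.pow 2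
  have hdw := deriv_w_contOn hw
  unfold phifun
  apply ContinuousOn.add
  · apply ContinuousOn.mul _ hT
    apply ContinuousOn.add
    · exact (continuousOn_const.mul ((continuous_pow (n-1)).continuousOn)).mul hw2
    · exact ((continuous_pow n).continuousOn).mul
        ((continuousOn_const.mul hw.continuousOn).mul hdw)
  · exact (ffun_contOn hw).mul (hginv.mul (continuousOn_const.mul (ffun_contOn hw)))

lemma step_cd
    (hintH : IntegrableOn (fun r : ℝ => (Real.log (Cconst n τ) - ((n:ℝ)+1)
        - Real.log (1 - 2*ε)) * ffun n w r
        + 4*τ*(r^n * (deriv w r)^2) - ffun n w r * Real.log ((w r)^2)) (Ioi 0))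
    {c d : ℝ} (hc : 0 < c) (hcd : c ≤ d) :
    (ffun n w c * Tfun n τ w ε c) - (ffun n w d * Tfun n τ w ε d)
      ≤ ∫ r in Ioc c d, ((Real.log (Cconst n τ) - ((n:ℝ)+1) - Real.log (1 - 2*ε)) * ffun n w r
          + 4*τ*(r^n * (deriv w r)^2) - ffun n w r * Real.log ((w r)^2)) := by
  set H : ℝ → ℝ := fun r => (Real.log (Cconst n τ) - ((n:ℝ)+1) - Real.log (1 - 2*ε)) * ffun n w r
      + 4*τ*(r^n * (deriv w r)^2) - ffun n w r * Real.log ((w r)^2) with hHdef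
  have hsub : Icc c d ⊆ Ioi 0 := fun x hx => lt_of_lt_of_le hc hx.1
  have hsub' : Ioc c d ⊆ Ioi 0 := fun x hx => lt_trans hc hx.1
  have huIcc : uIcc c d = Icc c d := uIcc_of_le hcd
  have hφcont : ContinuousOn (phifun n τ w ε) (Icc c d) :=
    (phifun_contOn hn hτ hw hfi hnorm1 hε).mono hsub
  have hFTC : ∫ r in c..d, phifun n τ w ε r
      = ffun n w d * Tfun n τ w ε d - ffun n w c * Tfun n τ w ε c := by
    apply intervalIntegral.integral_eq_sub_of_hasDerivAt
    · intro x hx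
      exact fT_hasDeriv hn hτ hw hfi hnorm1 hε (hsub (huIcc ▸ hx))
    · exact (huIcc ▸ hφcont).intervalIntegrable
  have hφint : IntegrableOn (phifun n τ w ε) (Ioc c d) :=
    hφcont.integrableOn_Icc.mono_set Ioc_subset_Icc_self
  have hHint : IntegrableOn H (Ioc c d) := hintH.mono_set hsub'
  have hpos : 0 ≤ ∫ r in Ioc c d, (H r + phifun n τ w ε r) := by
    apply setIntegral_nonneg measurableSet_Ioc
    intro x hx
    have hx0 : 0 < x := hsub' hx
    have hpt := pointwise_ineq hn hτ hw hfi hnorm1 hε hx0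
    rw [hHdef]
    dsimp only
    linarith
  rw [integral_add hHint hφint] at hpos
  rw [intervalIntegral.integral_of_le hcd] at hFTC
  linarith

lemma exists_small (k : ℕ) : ∃ x : ℝ, (k:ℝ) < x ∧ ffun n w x < 1/((k:ℝ)+1) := by
  by_contra hcon
  push_neg at hcon
  have hsubk : Ioi ((k:ℝ)) ⊆ Ioi (0:ℝ) := Ioi_subset_Ioi (Nat.cast_nonneg k)
  have hik : IntegrableOn (ffun n w) (Ioi (k:ℝ)) := hfi.mono_set hsubk
  have hconst : IntegrableOn (fun _ : ℝ => 1/((k:ℝ)+1)) (Ioi (k:ℝ)) := by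
    apply Integrable.mono' hik
    · exact aestronglyMeasurable_const
    · filter_upwards [ae_restrict_mem measurableSet_Ioi] with x hx
      rw [Real.norm_eq_abs, abs_of_pos (by positivity)]
      exact hcon x hx
  have hne : (1/((k:ℝ)+1)) ≠ 0 := by positivity
  have := ((integrableOn_const_iff (by simp)).1 hconst).resolve_left (by simpa [enorm_eq_zero] using hne)
  simp [Real.volume_Ioi] at this

lemma int_H_c_nonneg
    (hintH : IntegrableOn (fun r : ℝ => (Real.log (Cconst n τ) - ((n:ℝ)+1)
        - Real.log (1 - 2*ε)) * ffun n w r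
        + 4*τ*(r^n * (deriv w r)^2) - ffun n w r * Real.log ((w r)^2)) (Ioi 0))
    {c : ℝ} (hc : 0 < c) :
    0 ≤ ∫ r in Ioi c, ((Real.log (Cconst n τ) - ((n:ℝ)+1) - Real.log (1 - 2*ε)) * ffun n w r
        + 4*τ*(r^n * (deriv w r)^2) - ffun n w r * Real.log ((w r)^2)) := by
  set H : ℝ → ℝ := fun r => (Real.log (Cconst n τ) - ((n:ℝ)+1) - Real.log (1 - 2*ε)) * ffun n w r
      + 4*τ*(r^n * (deriv w r)^2) - ffun n w r * Real.log ((w r)^2) with hHdef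
  choose e he1 he2 using fun k => exists_small hn hτ hw hfi hnorm1 hε k
  set K := Qfun n τ (1-ε) with hKdef
  -- a sequence going to infinity on which f is small
  have he_top : Filter.Tendsto e Filter.atTop Filter.atTop :=
    Filter.tendsto_atTop_mono (fun k => (he1 k).le)
      tendsto_natCast_atTop_atTop
  have he_pos : ∀ᶠ k : ℕ in Filter.atTop, c ≤ e k := he_top.eventually_ge_atTop c
  have hepos : ∀ k : ℕ, 0 < e k := fun k => lt_of_le_of_lt (Nat.cast_nonneg k) (he1 k)
  have hfe : Filter.Tendsto (fun k => ffun n w (e k)) Filter.atTop (nhds 0) := by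
    apply squeeze_zero (g := fun k : ℕ => 1/((k:ℝ)+1))
      (fun k => ffun_nonneg (hepos k).le) (fun k => (he2 k).le)
    exact tendsto_one_div_add_atTop_nhds_zero_nat
  have hHH : Filter.Tendsto (fun k => ∫ r in c..(e k), H r) Filter.atTop
      (nhds (∫ r in Ioi c, H r)) :=
    MeasureTheory.intervalIntegral_tendsto_integral_Ioi c
      (hintH.mono_set (Ioi_subset_Ioi hc.le)) he_top
  have hlim2 : Filter.Tendsto (fun k => -(ffun n w (e k) * K)) Filter.atTop (nhds 0) := by
    have h := (hfe.mul_const K).neg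
    simpa using h
  apply le_of_tendsto_of_tendsto hlim2 hHH
  filter_upwards [he_pos] with k hk
  have hek0 : 0 < e k := hepos k
  rw [intervalIntegral.integral_of_le hk]
  have hstep := step_cd hn hτ hw hfi hnorm1 hε hintH hc hk
  have hT1 : Tfun n τ w ε (e k) ≤ K := Tfun_le hn hτ hw hfi hnorm1 hε hek0
  have hT0 : 0 ≤ ffun n w c * Tfun n τ w ε c :=
    mul_nonneg (ffun_nonneg hc.le) (Tfun_pos hn hτ hw hfi hnorm1 hε hc).le
  have hmul : ffun n w (e k) * Tfun n τ w ε (e k) ≤ ffun n w (e k) * K :=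
    mul_le_mul_of_nonneg_left hT1 (ffun_nonneg hek0.le)
  linarith

lemma int_H_nonneg
    (hintH : IntegrableOn (fun r : ℝ => (Real.log (Cconst n τ) - ((n:ℝ)+1)
        - Real.log (1 - 2*ε)) * ffun n w r
        + 4*τ*(r^n * (deriv w r)^2) - ffun n w r * Real.log ((w r)^2)) (Ioi 0)) :
    0 ≤ ∫ r in Ioi (0:ℝ), ((Real.log (Cconst n τ) - ((n:ℝ)+1) - Real.log (1 - 2*ε)) * ffun n w r
        + 4*τ*(r^n * (deriv w r)^2) - ffun n w r * Real.log ((w r)^2)) := by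
  set H : ℝ → ℝ := fun r => (Real.log (Cconst n τ) - ((n:ℝ)+1) - Real.log (1 - 2*ε)) * ffun n w r
      + 4*τ*(r^n * (deriv w r)^2) - ffun n w r * Real.log ((w r)^2) with hHdef
  have hmono : Monotone (fun j : ℕ => Ioi ((1:ℝ)/((j:ℝ)+1))) := by
    intro i j hij
    apply Ioi_subset_Ioi
    apply one_div_le_one_div_of_le (by positivity)
    exact_mod_cast add_le_add_left (Nat.cast_le.2 hij) 1
  have hunion : (⋃ j : ℕ, Ioi ((1:ℝ)/((j:ℝ)+1))) = Ioi (0:ℝ) := by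
    ext x
    simp only [mem_iUnion, mem_Ioi]
    constructor
    · rintro ⟨j, hj⟩
      exact lt_trans (by positivity) hj
    · intro hx
      obtain ⟨j, hj⟩ := exists_nat_one_div_lt hx
      exact ⟨j, hj⟩
  have htend : Filter.Tendsto (fun j : ℕ => ∫ r in Ioi ((1:ℝ)/((j:ℝ)+1)), H r)
      Filter.atTop (nhds (∫ r in Ioi (0:ℝ), H r)) := by
    have h := MeasureTheory.tendsto_setIntegral_of_monotone
      (fun j : ℕ => measurableSet_Ioi) hmono (by rw [hunion]; exact hintH)
    rwa [hunion] at h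
  apply ge_of_tendsto htend
  filter_upwards with j
  exact int_H_c_nonneg hn hτ hw hfi hnorm1 hε hintH (by positivity)

/-- the main inequality for a fixed ε. -/
lemma eps_ineq
    (hgrad : IntegrableOn (fun r : ℝ => r ^ n * (deriv w r) ^ 2) (Ioi 0))
    (hent : IntegrableOn (fun r : ℝ => r ^ n * (w r) ^ 2 * Real.log ((w r) ^ 2)) (Ioi 0)) :
    (∫ r in Ioi (0:ℝ), r ^ n * (w r) ^ 2 * Real.log ((w r) ^ 2))
      + ((n:ℝ)+1) - Real.log (Cconst n τ) + Real.log (1 - 2*ε)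
      ≤ 4 * τ * ∫ r in Ioi (0:ℝ), r ^ n * (deriv w r) ^ 2 := by
  have hint1 : IntegrableOn (fun r => (Real.log (Cconst n τ) - ((n:ℝ)+1)
      - Real.log (1 - 2*ε)) * ffun n w r) (Ioi 0) := hfi.const_mul _
  have hint2 : IntegrableOn (fun r : ℝ => 4*τ*(r^n * (deriv w r)^2)) (Ioi 0) :=
    hgrad.const_mul _
  have hint3 : IntegrableOn (fun r : ℝ => ffun n w r * Real.log ((w r)^2)) (Ioi 0) := hent
  have hint12 : IntegrableOn (fun r : ℝ => (Real.log (Cconst n τ) - ((n:ℝ)+1)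
      - Real.log (1 - 2*ε)) * ffun n w r + 4*τ*(r^n * (deriv w r)^2)) (Ioi 0) :=
    hint1.add hint2
  have hintH : IntegrableOn (fun r : ℝ => (Real.log (Cconst n τ) - ((n:ℝ)+1)
      - Real.log (1 - 2*ε)) * ffun n w r
      + 4*τ*(r^n * (deriv w r)^2) - ffun n w r * Real.log ((w r)^2)) (Ioi 0) :=
    hint12.sub hint3
  have h0 := int_H_nonneg hn hτ hw hfi hnorm1 hε hintH
  rw [integral_sub hint12 hint3, integral_add hint1 hint2,
    MeasureTheory.integral_const_mul, MeasureTheory.integral_const_mul, hnorm1] at h0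
  have hEnt : ∫ r in Ioi (0:ℝ), ffun n w r * Real.log ((w r)^2)
      = ∫ r in Ioi (0:ℝ), r ^ n * (w r) ^ 2 * Real.log ((w r) ^ 2) := rfl
  rw [hEnt] at h0
  linarith

end T

end RadialLSI

/-- **Sharp radial logarithmic Sobolev inequality on the half-line.**
For `n ≥ 1`, `τ₀ > 0` and a continuously differentiable `w : (0,∞) → ℝ` with
`∫₀^∞ r^n w(r)² dr = 1`, finite weighted Dirichlet energy, and integrable entropy term:
`4τ₀ ∫₀^∞ r^n w'(r)² dr ≥ ∫₀^∞ r^n w(r)² log(w(r)²) dr + ((n+1)/2) log(4πτ₀) + (n+1) − log ω_n`. -/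
theorem radial_log_sobolev_inequality
    (n : ℕ) (hn : 1 ≤ n) (τ₀ : ℝ) (hτ₀ : 0 < τ₀) (w : ℝ → ℝ)
    (hw : ContDiffOn ℝ 1 w (Ioi 0))
    (hnorm : ∫ r in Ioi (0 : ℝ), r ^ n * (w r) ^ 2 = 1)
    (hgrad : IntegrableOn (fun r : ℝ => r ^ n * (deriv w r) ^ 2) (Ioi 0))
    (hent : IntegrableOn (fun r : ℝ => r ^ n * (w r) ^ 2 * Real.log ((w r) ^ 2)) (Ioi 0)) :
    4 * τ₀ * ∫ r in Ioi (0 : ℝ), r ^ n * (deriv w r) ^ 2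
      ≥ (∫ r in Ioi (0 : ℝ), r ^ n * (w r) ^ 2 * Real.log ((w r) ^ 2))
        + (((n : ℝ) + 1) / 2) * Real.log (4 * Real.pi * τ₀) + ((n : ℝ) + 1)
        - Real.log (sphereVolume n) := by
  have hfi : IntegrableOn (RadialLSI.ffun n w) (Ioi 0) := by
    by_contra h
    have h1 : (1:ℝ) = 0 := by
      rw [← hnorm]
      exact MeasureTheory.integral_undef h
    norm_num at h1
  have hnorm1 : ∫ r in Ioi (0:ℝ), RadialLSI.ffun n w r = 1 := hnorm
  have key : ∀ ε ∈ Ioo (0:ℝ) (1/2),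
      (∫ r in Ioi (0:ℝ), r ^ n * (w r) ^ 2 * Real.log ((w r) ^ 2))
        + ((n:ℝ)+1) - Real.log (RadialLSI.Cconst n τ₀) + Real.log (1 - 2*ε)
        ≤ 4 * τ₀ * ∫ r in Ioi (0:ℝ), r ^ n * (deriv w r) ^ 2 :=
    fun ε hε => RadialLSI.eps_ineq hn hτ₀ hw hfi hnorm1 hε hgrad hent
  -- take ε → 0⁺
  have hlg : Filter.Tendsto (fun ε : ℝ => Real.log (1 - 2*ε)) (nhdsWithin 0 (Ioi 0)) (nhds 0) := by
    have h1 : Filter.Tendsto (fun ε : ℝ => (1:ℝ) - 2*ε) (nhds 0) (nhds 1) := by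
      have hc : Continuous (fun ε : ℝ => (1:ℝ) - 2*ε) := by fun_prop
      have h := hc.tendsto 0
      norm_num at h
      exact h
    have h2 : Filter.Tendsto Real.log (nhds 1) (nhds 0) := by
      have h := Real.continuousAt_log (by norm_num : (1:ℝ) ≠ 0)
      simpa [ContinuousAt, Real.log_one] using h
    exact (h2.comp h1).mono_left nhdsWithin_le_nhds
  have hmain : (∫ r in Ioi (0:ℝ), r ^ n * (w r) ^ 2 * Real.log ((w r) ^ 2))
      + ((n:ℝ)+1) - Real.log (RadialLSI.Cconst n τ₀) + 0
      ≤ 4 * τ₀ * ∫ r in Ioi (0:ℝ), r ^ n * (deriv w r) ^ 2 := by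
    apply le_of_tendsto (Filter.Tendsto.const_add _ hlg)
    filter_upwards [Ioo_mem_nhdsGT_of_mem (by norm_num : (0:ℝ) ∈ Ico (0:ℝ) (1/2))] with ε hε
    have h := key ε hε
    linarith
  have hlogC : Real.log (RadialLSI.Cconst n τ₀)
      = Real.log (sphereVolume n) - (((n:ℝ)+1)/2) * Real.log (4 * Real.pi * τ₀) := by
    unfold RadialLSI.Cconst
    rw [Real.log_mul (RadialLSI.sphereVolume_pos n).ne'
      (Real.rpow_pos_of_pos (by positivity) _).ne', Real.log_rpow (by positivity)]
    ring
  rw [hlogC] at hmain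
  linarith
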